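/- For every measurable g : 𝒱 → ℝ (with all expectations below finite), E[(A·Y/π(X) − (1−A)·Y/(1−π(X)) − g(V))²] = E[((Y¹−Y⁰) − g(V))²] + E[(A·Y/π(X) − (1−A)·Y/(1−π(X)) − (Y¹−Y⁰))²] + 2·E[(A·Y/π(X) − (1−A)·Y/(1−π(X)) − (Y¹−Y⁰))·(Y¹−Y⁰)]. In particular, since the last two terms do not depend on g, for any two such functions g, g' one has E[(A·Y/π(X) − (1−A)·Y/(1−π(X)) − g(V))²] − E[(A·Y/π(X) − (1−A)·Y/(1−π(X)) − g'(V))²] = E[((Y¹−Y⁰) − g(V))²] − E[((Y¹−Y⁰) − g'(V))²], so the inverse-probability-weighted population risk and the oracle population risk have the same minimizers over any class of functions. -/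

import Mathlib

open MeasureTheory ProbabilityTheory

/-- The inverse-probability-weighted pseudo-outcome `A·Y/π(X) − (1−A)·Y/(1−π(X))`. -/
noncomputable def ipwPseudo {Ω 𝓧 : Type*} (A Y : Ω → ℝ) (X : Ω → 𝓧) (pr : 𝓧 → ℝ)
    (ω : Ω) : ℝ :=
  A ω * Y ω / pr (X ω) - (1 - A ω) * Y ω / (1 - pr (X ω))

section Aux

variable {Ω 𝓧 : Type*} [mΩ : MeasurableSpace Ω] [MeasurableSpace 𝓧]

lemma integrable_of_bdd {P : Measure Ω} [IsFiniteMeasure P] {f : Ω → ℝ} {C : ℝ}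
    (hf : Measurable f) (hb : ∀ ω, |f ω| ≤ C) : Integrable f P :=
  Integrable.mono' (integrable_const C) hf.aestronglyMeasurable
    (Filter.Eventually.of_forall (by simpa [Real.norm_eq_abs] using hb))

/-- The σ-algebra generated by a map. -/
abbrev mcomap {Ω β : Type*} [MeasurableSpace β] (f : Ω → β) : MeasurableSpace Ω :=
  MeasurableSpace.comap f inferInstance

/-- Under conditional exchangeability with known propensity `pr`, the propensity is also
a version of the conditional expectation of `A` given `(X, Y0, Y1)`. -/
lemma condexp_A_join [StandardBorelSpace Ω]
    (P : Measure Ω) [IsProbabilityMeasure P]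
    (X : Ω → 𝓧) (hX : Measurable X)
    (A Y0 Y1 : Ω → ℝ) (hA : Measurable A) (hY0 : Measurable Y0) (hY1 : Measurable Y1)
    (hA01 : ∀ ω, A ω = 0 ∨ A ω = 1)
    (pr : 𝓧 → ℝ) (hprm : Measurable pr) (hpr : ∀ x, 0 < pr x ∧ pr x < 1)
    (hprCE : (fun ω => pr (X ω)) =ᵐ[P] P[A | MeasurableSpace.comap X inferInstance])
    (hCE : CondIndepFun (MeasurableSpace.comap X inferInstance) hX.comap_le
      (fun ω => (Y0 ω, Y1 ω)) A P) :
    (fun ω => pr (X ω)) =ᵐ[P]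
      P[A | MeasurableSpace.comap (fun ω => (X ω, Y0 ω, Y1 ω)) inferInstance] := by
  have hm' : mcomap X ≤ mΩ := hX.comap_le
  set W : Ω → ℝ × ℝ := fun ω => (Y0 ω, Y1 ω) with hWdef
  have hW : Measurable[mΩ] W := hY0.prodMk hY1
  set Z : Ω → 𝓧 × ℝ × ℝ := fun ω => (X ω, Y0 ω, Y1 ω) with hZdef
  have hZ : Measurable[mΩ] Z := hX.prodMk hW
  have h𝔪 : mcomap Z ≤ mΩ := hZ.comap_le
  have hA0 : ∀ ω, 0 ≤ A ω := fun ω => by rcases hA01 ω with h | h <;> simp [h]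
  have hA1 : ∀ ω, A ω ≤ 1 := fun ω => by rcases hA01 ω with h | h <;> simp [h]
  have hAint : Integrable A P :=
    integrable_of_bdd hA (fun ω => abs_le.mpr ⟨by linarith [hA0 ω], hA1 ω⟩)
  have hprX : Measurable[mΩ] fun ω => pr (X ω) := hprm.comp hX
  have hpint : Integrable (fun ω => pr (X ω)) P :=
    integrable_of_bdd hprX (fun ω => abs_le.mpr
      ⟨by linarith [(hpr (X ω)).1], le_of_lt (hpr (X ω)).2⟩)
  -- core computation on rectangles
  have core : ∀ t u, MeasurableSet t → MeasurableSet u →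
      ∫ ω in X ⁻¹' t ∩ W ⁻¹' u, A ω ∂P = ∫ ω in X ⁻¹' t ∩ W ⁻¹' u, pr (X ω) ∂P := by
    intro t u ht hu
    have hs₁m : MeasurableSet[(mcomap X)] (X ⁻¹' t) := ⟨t, ht, rfl⟩
    have hs₁ : MeasurableSet[mΩ] (X ⁻¹' t) := hX ht
    have hE : MeasurableSet[mΩ] (W ⁻¹' u) := hW hu
    have hsA : MeasurableSet[mΩ] (A ⁻¹' {1}) := hA (measurableSet_singleton 1)
    have hindint : ∀ (s : Set Ω), MeasurableSet s →
        Integrable (s.indicator fun _ => (1 : ℝ)) P :=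
      fun s hs => (integrable_const 1).indicator hs
    -- LHS
    have lfun : (W ⁻¹' u).indicator A
        = (W ⁻¹' u ∩ A ⁻¹' {1}).indicator (fun _ => (1 : ℝ)) := by
      funext ω
      by_cases h1 : ω ∈ W ⁻¹' u
      · rcases hA01 ω with h | h <;>
          simp [Set.indicator_apply, Set.mem_inter_iff, h1, Set.mem_preimage, h]
      · simp [Set.indicator_apply, Set.mem_inter_iff, h1]
    have l3 : (P⟦W ⁻¹' u ∩ A ⁻¹' {1} | (mcomap X)⟧)
        =ᵐ[P] fun ω => (P⟦W ⁻¹' u | (mcomap X)⟧) ω * (P⟦A ⁻¹' {1} | (mcomap X)⟧) ω :=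
      (condIndepFun_iff_condExp_inter_preimage_eq_mul hW hA).mp hCE u {1} hu
        (measurableSet_singleton 1)
    have l4 : (P⟦A ⁻¹' {1} | (mcomap X)⟧) =ᵐ[P] fun ω => pr (X ω) := by
      have heq : (A ⁻¹' {1}).indicator (fun _ => (1 : ℝ)) = A := by
        funext ω
        rcases hA01 ω with h | h <;> simp [Set.indicator_apply, Set.mem_preimage, h]
      have : (P⟦A ⁻¹' {1} | (mcomap X)⟧) = P[A | (mcomap X)] := by rw [heq]
      rw [this]; exact hprCE.symm
    have l5 : (P⟦W ⁻¹' u ∩ A ⁻¹' {1} | (mcomap X)⟧)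
        =ᵐ[P] fun ω => (P⟦W ⁻¹' u | (mcomap X)⟧) ω * pr (X ω) := by
      filter_upwards [l3, l4] with ω h3 h4
      rw [h3, h4]
    have lhs_eq : ∫ ω in X ⁻¹' t ∩ W ⁻¹' u, A ω ∂P
        = ∫ ω in X ⁻¹' t, (P⟦W ⁻¹' u | (mcomap X)⟧) ω * pr (X ω) ∂P := by
      rw [← setIntegral_indicator hE, lfun,
        ← setIntegral_condExp hm' (hindint _ (hE.inter hsA)) hs₁m]
      exact setIntegral_congr_ae hs₁ (l5.mono fun ω hω _ => hω)
    -- RHS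
    have rfun : (W ⁻¹' u).indicator (fun ω => pr (X ω))
        = (fun ω => pr (X ω)) * ((W ⁻¹' u).indicator fun _ => (1 : ℝ)) := by
      funext ω
      by_cases h1 : ω ∈ W ⁻¹' u <;> simp [Set.indicator_apply, h1]
    have hXm' : Measurable[(mcomap X)] X := fun s hs => ⟨s, hs, rfl⟩
    have hsmpr : StronglyMeasurable[(mcomap X)] fun ω => pr (X ω) :=
      (hprm.comp hXm').stronglyMeasurable
    have hfgint : Integrable ((fun ω => pr (X ω)) * ((W ⁻¹' u).indicator fun _ => (1 : ℝ))) P := by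
      apply integrable_of_bdd (C := 1)
      · exact hprX.mul (measurable_const.indicator hE)
      · intro ω
        rw [Pi.mul_apply, abs_mul]
        calc |pr (X ω)| * |(W ⁻¹' u).indicator (fun _ => (1:ℝ)) ω| ≤ 1 * 1 := by
              apply mul_le_mul
              · exact abs_le.mpr ⟨by linarith [(hpr (X ω)).1], le_of_lt (hpr (X ω)).2⟩
              · by_cases h1 : ω ∈ W ⁻¹' u <;> simp [Set.indicator_apply, h1]
              · positivity
              · norm_num
          _ = 1 := by norm_num
    have rmul : P[(fun ω => pr (X ω)) * ((W ⁻¹' u).indicator fun _ => (1 : ℝ)) | (mcomap X)]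
        =ᵐ[P] (fun ω => pr (X ω)) * (P⟦W ⁻¹' u | (mcomap X)⟧) :=
      condExp_mul_of_stronglyMeasurable_left hsmpr hfgint (hindint _ hE)
    have rhs_eq : ∫ ω in X ⁻¹' t ∩ W ⁻¹' u, pr (X ω) ∂P
        = ∫ ω in X ⁻¹' t, (P⟦W ⁻¹' u | (mcomap X)⟧) ω * pr (X ω) ∂P := by
      rw [← setIntegral_indicator hE, rfun,
        ← setIntegral_condExp hm' hfgint hs₁m]
      refine setIntegral_congr_ae hs₁ (rmul.mono fun ω hω _ => ?_)
      rw [hω, Pi.mul_apply, mul_comm]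
    rw [lhs_eq, rhs_eq]
  -- measure equality via π-system argument
  have hAnn : (fun _ => (0:ℝ)) ≤ᵐ[P] A := by filter_upwards with ω using hA0 ω
  have hpnn : ∀ ω, (0:ℝ) ≤ pr (X ω) := fun ω => le_of_lt (hpr (X ω)).1
  set dA : Ω → ENNReal := fun ω => ENNReal.ofReal (A ω) with hdA
  set dp : Ω → ENNReal := fun ω => ENNReal.ofReal (pr (X ω)) with hdp
  have hdAm : Measurable[mΩ] dA := hA.ennreal_ofReal
  have hdpm : Measurable[mΩ] dp := hprX.ennreal_ofReal
  have hfinA : IsFiniteMeasure (P.withDensity dA) := by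
    refine isFiniteMeasure_withDensity (μ := P) (f := dA) ?_
    have hle : ∫⁻ ω, dA ω ∂P ≤ 1 := by
      calc ∫⁻ ω, dA ω ∂P ≤ ∫⁻ _, 1 ∂P := by
            refine lintegral_mono fun ω => ?_
            simpa [hdA] using ENNReal.ofReal_le_one.mpr (hA1 ω)
        _ = 1 := by simp
    exact ne_top_of_le_ne_top (by norm_num) hle
  have hfinp : IsFiniteMeasure (P.withDensity dp) := by
    refine isFiniteMeasure_withDensity (μ := P) (f := dp) ?_
    have hle : ∫⁻ ω, dp ω ∂P ≤ 1 := by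
      calc ∫⁻ ω, dp ω ∂P ≤ ∫⁻ _, 1 ∂P := by
            refine lintegral_mono fun ω => ?_
            simpa [hdp] using ENNReal.ofReal_le_one.mpr (le_of_lt (hpr (X ω)).2)
        _ = 1 := by simp
    exact ne_top_of_le_ne_top (by norm_num) hle
  -- key translation: set-lintegrals as ofReal of integrals
  have keyA : ∀ s : Set Ω, MeasurableSet s →
      (P.withDensity dA) s = ENNReal.ofReal (∫ ω in s, A ω ∂P) := by
    intro s hs
    rw [withDensity_apply _ hs,
      ← ofReal_integral_eq_lintegral_ofReal hAint.integrableOn (ae_restrict_of_ae hAnn)]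
  have keyp : ∀ s : Set Ω, MeasurableSet s →
      (P.withDensity dp) s = ENNReal.ofReal (∫ ω in s, pr (X ω) ∂P) := by
    intro s hs
    rw [withDensity_apply _ hs,
      ← ofReal_integral_eq_lintegral_ofReal hpint.integrableOn
        (Filter.Eventually.of_forall hpnn)]
  have hν : (P.withDensity dA).map Z = (P.withDensity dp).map Z := by
    haveI := hfinA; haveI := hfinp
    refine ext_of_generate_finite _ generateFrom_prod.symm isPiSystem_prod ?_ ?_
    · rintro s ⟨t, ht, u, hu, rfl⟩
      rw [Measure.map_apply hZ (ht.prod hu), Measure.map_apply hZ (ht.prod hu)]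
      have hpre : Z ⁻¹' (t ×ˢ u) = X ⁻¹' t ∩ W ⁻¹' u := Set.mk_preimage_prod X W
      rw [hpre, keyA _ ((hX ht).inter (hW hu)), keyp _ ((hX ht).inter (hW hu)),
        core t u ht hu]
    · rw [Measure.map_apply hZ MeasurableSet.univ, Measure.map_apply hZ MeasurableSet.univ,
        keyA _ (hZ MeasurableSet.univ), keyp _ (hZ MeasurableSet.univ)]
      have h := core Set.univ Set.univ MeasurableSet.univ MeasurableSet.univ
      simp only [Set.preimage_univ, Set.univ_inter] at h ⊢
      rw [h]
  -- set integral equality on (mcomap Z)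
  have hseteq : ∀ s : Set Ω, MeasurableSet[(mcomap Z)] s →
      ∫ ω in s, pr (X ω) ∂P = ∫ ω in s, A ω ∂P := by
    rintro s ⟨s', hs', rfl⟩
    have h1 : (P.withDensity dA) (Z ⁻¹' s') = (P.withDensity dp) (Z ⁻¹' s') := by
      rw [← Measure.map_apply hZ hs', ← Measure.map_apply hZ hs', hν]
    rw [keyA _ (hZ hs'), keyp _ (hZ hs')] at h1
    have h2 := (ENNReal.ofReal_eq_ofReal_iff
      (integral_nonneg hA0) (integral_nonneg hpnn)).mp h1
    exact h2.symm
  -- conclude via uniqueness of conditional expectation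
  have hZ𝔪 : Measurable[(mcomap Z)] Z := fun s hs => ⟨s, hs, rfl⟩
  have hX𝔪 : Measurable[(mcomap Z)] X := (measurable_fst.comp hZ𝔪 : _)
  have hsmpr𝔪 : StronglyMeasurable[(mcomap Z)] fun ω => pr (X ω) :=
    (hprm.comp hX𝔪).stronglyMeasurable
  exact ae_eq_condExp_of_forall_setIntegral_eq h𝔪 hAint
    (fun s _ _ => hpint.integrableOn) (fun s hs _ => hseteq s hs)
    hsmpr𝔪.aestronglyMeasurable

end Aux

/-- the IPW population risk decomposes as the oracle risk plus terms not
depending on `g`; consequently the IPW risk and the oracle risk have the same minimizers. -/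
theorem stmt0 {Ω 𝓧 𝓥 : Type*} [MeasurableSpace Ω] [StandardBorelSpace Ω]
    [MeasurableSpace 𝓧] [MeasurableSpace 𝓥]
    (P : Measure Ω) [IsProbabilityMeasure P]
    (X : Ω → 𝓧) (hX : Measurable X) (v : 𝓧 → 𝓥) (hv : Measurable v)
    (A Y0 Y1 Y : Ω → ℝ) (hA : Measurable A) (hY0 : Measurable Y0) (hY1 : Measurable Y1)
    (hA01 : ∀ ω, A ω = 0 ∨ A ω = 1)
    (hYdef : ∀ ω, Y ω = A ω * Y1 ω + (1 - A ω) * Y0 ω)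
    (pr : 𝓧 → ℝ) (hprm : Measurable pr) (hpr : ∀ x, 0 < pr x ∧ pr x < 1)
    (hprCE : (fun ω => pr (X ω)) =ᵐ[P] P[A | MeasurableSpace.comap X inferInstance])
    (hCE : CondIndepFun (MeasurableSpace.comap X inferInstance) hX.comap_le
      (fun ω => (Y0 ω, Y1 ω)) A P)
    (g g' : 𝓥 → ℝ) (hg : Measurable g) (hg' : Measurable g')
    (hI1 : Integrable (fun ω => (ipwPseudo A Y X pr ω - g (v (X ω))) ^ 2) P)
    (hI1' : Integrable (fun ω => (ipwPseudo A Y X pr ω - g' (v (X ω))) ^ 2) P)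
    (hI2 : Integrable (fun ω => ((Y1 ω - Y0 ω) - g (v (X ω))) ^ 2) P)
    (hI2' : Integrable (fun ω => ((Y1 ω - Y0 ω) - g' (v (X ω))) ^ 2) P)
    (hI3 : Integrable (fun ω => (ipwPseudo A Y X pr ω - (Y1 ω - Y0 ω)) ^ 2) P)
    (hI4 : Integrable (fun ω => (ipwPseudo A Y X pr ω - (Y1 ω - Y0 ω)) * (Y1 ω - Y0 ω)) P)
    (hI5 : Integrable (fun ω => (ipwPseudo A Y X pr ω - (Y1 ω - Y0 ω)) * g (v (X ω))) P)
    (hI5' : Integrable (fun ω => (ipwPseudo A Y X pr ω - (Y1 ω - Y0 ω)) * g' (v (X ω))) P) :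
    (∫ ω, (ipwPseudo A Y X pr ω - g (v (X ω))) ^ 2 ∂P
      = ∫ ω, ((Y1 ω - Y0 ω) - g (v (X ω))) ^ 2 ∂P
        + ∫ ω, (ipwPseudo A Y X pr ω - (Y1 ω - Y0 ω)) ^ 2 ∂P
        + 2 * ∫ ω, (ipwPseudo A Y X pr ω - (Y1 ω - Y0 ω)) * (Y1 ω - Y0 ω) ∂P)
    ∧ (∫ ω, (ipwPseudo A Y X pr ω - g' (v (X ω))) ^ 2 ∂P
      = ∫ ω, ((Y1 ω - Y0 ω) - g' (v (X ω))) ^ 2 ∂P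
        + ∫ ω, (ipwPseudo A Y X pr ω - (Y1 ω - Y0 ω)) ^ 2 ∂P
        + 2 * ∫ ω, (ipwPseudo A Y X pr ω - (Y1 ω - Y0 ω)) * (Y1 ω - Y0 ω) ∂P)
    ∧ (∫ ω, (ipwPseudo A Y X pr ω - g (v (X ω))) ^ 2 ∂P
        - ∫ ω, (ipwPseudo A Y X pr ω - g' (v (X ω))) ^ 2 ∂P
      = ∫ ω, ((Y1 ω - Y0 ω) - g (v (X ω))) ^ 2 ∂P
        - ∫ ω, ((Y1 ω - Y0 ω) - g' (v (X ω))) ^ 2 ∂P) := by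
  have hcond := condexp_A_join P X hX A Y0 Y1 hA hY0 hY1 hA01 pr hprm hpr hprCE hCE
  set Z : Ω → 𝓧 × ℝ × ℝ := fun ω => (X ω, Y0 ω, Y1 ω) with hZdef
  have hZ : Measurable Z := hX.prodMk (hY0.prodMk hY1)
  have h𝔪 : mcomap Z ≤ _ := hZ.comap_le
  have hZ𝔪 : Measurable[(mcomap Z)] Z := fun s hs => ⟨s, hs, rfl⟩
  have hX𝔪 : Measurable[(mcomap Z)] X := (measurable_fst.comp hZ𝔪 : _)
  have hY0𝔪 : Measurable[(mcomap Z)] Y0 := ((measurable_fst.comp measurable_snd).comp hZ𝔪 : _)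
  have hY1𝔪 : Measurable[(mcomap Z)] Y1 := ((measurable_snd.comp measurable_snd).comp hZ𝔪 : _)
  have hA0 : ∀ ω, 0 ≤ A ω := fun ω => by rcases hA01 ω with h | h <;> simp [h]
  have hA1 : ∀ ω, A ω ≤ 1 := fun ω => by rcases hA01 ω with h | h <;> simp [h]
  have hAint : Integrable A P :=
    integrable_of_bdd hA (fun ω => abs_le.mpr ⟨by linarith [hA0 ω], hA1 ω⟩)
  have hprX : Measurable fun ω => pr (X ω) := hprm.comp hX
  have hpint : Integrable (fun ω => pr (X ω)) P :=
    integrable_of_bdd hprX (fun ω => abs_le.mpr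
      ⟨by linarith [(hpr (X ω)).1], le_of_lt (hpr (X ω)).2⟩)
  set B : Ω → ℝ := A - fun ω => pr (X ω) with hBdef
  have hBint : Integrable B P := hAint.sub hpint
  have hcondB : P[B | (mcomap Z)] =ᵐ[P] fun _ => (0 : ℝ) := by
    have h1 : P[B | (mcomap Z)] =ᵐ[P] P[A | (mcomap Z)] - P[(fun ω => pr (X ω)) | (mcomap Z)] :=
      condExp_sub hAint hpint _
    have h2 : P[(fun ω => pr (X ω)) | (mcomap Z)] = fun ω => pr (X ω) :=
      condExp_of_stronglyMeasurable h𝔪 ((hprm.comp hX𝔪).stronglyMeasurable) hpint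
    filter_upwards [h1, hcond] with ω hω hc
    rw [hω, Pi.sub_apply, h2, ← hc, sub_self]
  -- pointwise identity for the pseudo-outcome residual
  have hid : ∀ ω, ipwPseudo A Y X pr ω - (Y1 ω - Y0 ω)
      = B ω * (Y1 ω / pr (X ω) + Y0 ω / (1 - pr (X ω))) := by
    intro ω
    have h0 : pr (X ω) ≠ 0 := ne_of_gt (hpr (X ω)).1
    have h1 : 1 - pr (X ω) ≠ 0 := ne_of_gt (by linarith [(hpr (X ω)).2])
    simp only [hBdef, Pi.sub_apply, ipwPseudo]
    rw [hYdef ω]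
    rcases hA01 ω with h | h <;> rw [h] <;> field_simp <;> ring
  -- the key orthogonality: for (mcomap Z)-measurable K, E[K·B] = 0
  have key : ∀ (G : 𝓥 → ℝ), Measurable G →
      Integrable (fun ω => (ipwPseudo A Y X pr ω - (Y1 ω - Y0 ω)) * G (v (X ω))) P →
      ∫ ω, (ipwPseudo A Y X pr ω - (Y1 ω - Y0 ω)) * G (v (X ω)) ∂P = 0 := by
    intro G hG hGint
    set K : Ω → ℝ := fun ω => (Y1 ω / pr (X ω) + Y0 ω / (1 - pr (X ω))) * G (v (X ω))
      with hKdef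
    have hKsm : StronglyMeasurable[(mcomap Z)] K := by
      apply Measurable.stronglyMeasurable
      exact ((hY1𝔪.div (hprm.comp hX𝔪)).add
        (hY0𝔪.div (measurable_const.sub (hprm.comp hX𝔪)))).mul ((hG.comp hv).comp hX𝔪)
    have hpt : ∀ ω, (ipwPseudo A Y X pr ω - (Y1 ω - Y0 ω)) * G (v (X ω)) = (K * B) ω := by
      intro ω
      rw [hid ω]
      simp only [Pi.mul_apply, hKdef]
      ring
    have hKBint : Integrable (K * B) P :=
      hGint.congr (Filter.Eventually.of_forall hpt)
    have hmul : P[K * B | (mcomap Z)] =ᵐ[P] K * P[B | (mcomap Z)] :=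
      condExp_mul_of_stronglyMeasurable_left hKsm hKBint hBint
    have hzero : P[K * B | (mcomap Z)] =ᵐ[P] fun _ => (0 : ℝ) := by
      filter_upwards [hmul, hcondB] with ω h1 h2
      rw [h1, Pi.mul_apply, h2, mul_zero]
    calc ∫ ω, (ipwPseudo A Y X pr ω - (Y1 ω - Y0 ω)) * G (v (X ω)) ∂P
        = ∫ ω, (K * B) ω ∂P := integral_congr_ae (Filter.Eventually.of_forall hpt)
      _ = ∫ ω, (P[K * B | (mcomap Z)]) ω ∂P := (integral_condExp h𝔪).symm
      _ = ∫ _, (0 : ℝ) ∂P := integral_congr_ae hzero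
      _ = 0 := integral_zero _ _
  -- risk decomposition given the orthogonality
  have decomp : ∀ (G : 𝓥 → ℝ), Measurable G →
      Integrable (fun ω => ((Y1 ω - Y0 ω) - G (v (X ω))) ^ 2) P →
      Integrable (fun ω => (ipwPseudo A Y X pr ω - (Y1 ω - Y0 ω)) * G (v (X ω))) P →
      ∫ ω, (ipwPseudo A Y X pr ω - G (v (X ω))) ^ 2 ∂P
        = ∫ ω, ((Y1 ω - Y0 ω) - G (v (X ω))) ^ 2 ∂P
          + ∫ ω, (ipwPseudo A Y X pr ω - (Y1 ω - Y0 ω)) ^ 2 ∂P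
          + 2 * ∫ ω, (ipwPseudo A Y X pr ω - (Y1 ω - Y0 ω)) * (Y1 ω - Y0 ω) ∂P := by
    intro G hG hG2 hG5
    have hzero := key G hG hG5
    have hint12 : Integrable (fun ω => ((Y1 ω - Y0 ω) - G (v (X ω))) ^ 2
        + (ipwPseudo A Y X pr ω - (Y1 ω - Y0 ω)) ^ 2) P := hG2.add hI3
    have hint2c : Integrable (fun ω =>
        2 * ((ipwPseudo A Y X pr ω - (Y1 ω - Y0 ω)) * (Y1 ω - Y0 ω))) P := hI4.const_mul 2
    have hint123 : Integrable (fun ω => (((Y1 ω - Y0 ω) - G (v (X ω))) ^ 2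
        + (ipwPseudo A Y X pr ω - (Y1 ω - Y0 ω)) ^ 2)
        + 2 * ((ipwPseudo A Y X pr ω - (Y1 ω - Y0 ω)) * (Y1 ω - Y0 ω))) P :=
      hint12.add hint2c
    have hintG5 : Integrable (fun ω =>
        2 * ((ipwPseudo A Y X pr ω - (Y1 ω - Y0 ω)) * G (v (X ω)))) P := hG5.const_mul 2
    have hpt : ∀ ω, (ipwPseudo A Y X pr ω - G (v (X ω))) ^ 2
        = (((Y1 ω - Y0 ω) - G (v (X ω))) ^ 2
            + (ipwPseudo A Y X pr ω - (Y1 ω - Y0 ω)) ^ 2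
            + 2 * ((ipwPseudo A Y X pr ω - (Y1 ω - Y0 ω)) * (Y1 ω - Y0 ω)))
          - 2 * ((ipwPseudo A Y X pr ω - (Y1 ω - Y0 ω)) * G (v (X ω))) := by
      intro ω; ring
    calc ∫ ω, (ipwPseudo A Y X pr ω - G (v (X ω))) ^ 2 ∂P
        = ∫ ω, ((((Y1 ω - Y0 ω) - G (v (X ω))) ^ 2
            + (ipwPseudo A Y X pr ω - (Y1 ω - Y0 ω)) ^ 2
            + 2 * ((ipwPseudo A Y X pr ω - (Y1 ω - Y0 ω)) * (Y1 ω - Y0 ω)))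
          - 2 * ((ipwPseudo A Y X pr ω - (Y1 ω - Y0 ω)) * G (v (X ω)))) ∂P :=
          integral_congr_ae (Filter.Eventually.of_forall hpt)
      _ = ∫ ω, (((Y1 ω - Y0 ω) - G (v (X ω))) ^ 2
            + (ipwPseudo A Y X pr ω - (Y1 ω - Y0 ω)) ^ 2
            + 2 * ((ipwPseudo A Y X pr ω - (Y1 ω - Y0 ω)) * (Y1 ω - Y0 ω))) ∂P
          - ∫ ω, 2 * ((ipwPseudo A Y X pr ω - (Y1 ω - Y0 ω)) * G (v (X ω))) ∂P :=
          integral_sub hint123 hintG5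
      _ = ∫ ω, ((Y1 ω - Y0 ω) - G (v (X ω))) ^ 2 ∂P
          + ∫ ω, (ipwPseudo A Y X pr ω - (Y1 ω - Y0 ω)) ^ 2 ∂P
          + 2 * ∫ ω, (ipwPseudo A Y X pr ω - (Y1 ω - Y0 ω)) * (Y1 ω - Y0 ω) ∂P := by
          rw [integral_add hint12 hint2c, integral_add hG2 hI3, integral_const_mul,
            integral_const_mul, hzero]
          ring
  have h1 := decomp g hg hI2 hI5
  have h2 := decomp g' hg' hI2' hI5'
  exact ⟨h1, h2, by rw [h1, h2]; ring⟩
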